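/- If I is a model of program P and I' ⊑ I, then Γ_P(I') ⊑ I. -/
import Mathlib


/-- Network formulas over labels `L`. -/
inductive Formula (L : Type) where
  | atom : L → Set ℝ → Formula L
  | and : Formula L → Formula L → Formula L
  | or : Formula L → Formula L → Formula L
  | not : Formula L → Formula L

/-- Satisfaction of a formula by a world (assignment of bounds to labels). -/
def Sat {L : Type} (W : L → Set ℝ) : Formula L → Prop
  | .atom l bnd =>
      bnd = Set.Icc 0 1 ∨ (bnd ≠ ∅ ∧ bnd ≠ Set.Icc 0 1 ∧ W l ⊆ bnd)
  | .and f g => Sat W f ∧ Sat W g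
  | .or f g => Sat W f ∨ Sat W g
  | .not f => ¬ Sat W f

/-- Negation-free formulas. -/
def NegFree {L : Type} : Formula L → Prop
  | .atom _ _ => True
  | .and f g => NegFree f ∧ NegFree g
  | .or f g => NegFree f ∧ NegFree g
  | .not _ => False

/-- Formulas mentioning only non-fluent labels. -/
def NonFluentFormula {L : Type} (fluent : L → Prop) : Formula L → Prop
  | .atom l _ => ¬ fluent l
  | .and f g => NonFluentFormula fluent f ∧ NonFluentFormula fluent g
  | .or f g => NonFluentFormula fluent f ∧ NonFluentFormula fluent g
  | .not f => NonFluentFormula fluent f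

/-- Components of the network: nodes and (directed) edges. -/
def Comp (V : Type) := V ⊕ (V × V)

/-- Network interpretations and interpretations. -/
def NetI (V L : Type) := Comp V → L → Set ℝ
def Interp (V L : Type) := ℕ → NetI V L

/-- `I ⊑ I'` iff every bound in `I'` is a subset of the corresponding bound in `I`. -/
def ile {V L : Type} (I I' : Interp V L) : Prop :=
  ∀ t c lab, I' t c lab ⊆ I t c lab

/-- A MANCaLog rule: head label, time offset, target criteria, neighbor
criteria `(gE, gN, h)` and an influence function. -/
structure Rule (L : Type) where
  head : L
  dt : ℕ
  tc : Formula L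
  gE : Formula L
  gN : Formula L
  h : Formula L
  ifl : ℕ → ℕ → Set ℝ

/-- A MANCaLog fact `(⟨lab,bnd⟩,c):[t1,t2]`. -/
structure MFact (V L : Type) where
  lab : L
  bnd : Set ℝ
  c : Comp V
  t1 : ℕ
  t2 : ℕ

/-- An integrity constraint `⟨lab,bnd⟩ ↩ body`. -/
structure IC (L : Type) where
  lab : L
  bnd : Set ℝ
  body : Formula L

/-- A MANCaLog program. -/
structure Program (V L : Type) where
  facts : List (MFact V L)
  ics : List (IC L)
  rules : List (Rule L)

/-- Eligible neighbors of `v` w.r.t. a rule `r` under network interpretation `NI`. -/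
def ELIG {V L : Type} (E : V → V → Prop) (NI : NetI V L) (v : V) (r : Rule L) :
    Set V :=
  {v' | E v' v ∧ Sat (NI (Sum.inl v')) r.gN ∧ Sat (NI (Sum.inr (v', v))) r.gE}

/-- Qualifying neighbors of `v` w.r.t. rule `r` under `NI`. -/
def QUAL {V L : Type} (E : V → V → Prop) (NI : NetI V L) (v : V) (r : Rule L) :
    Set V :=
  {v' ∈ ELIG E NI v r | Sat (NI (Sum.inl v')) r.h}

/-- `BOUND(r,v,NI) = ifl(|QUAL|,|ELIG|)`. -/
noncomputable def BOUND {V L : Type} (E : V → V → Prop) (NI : NetI V L)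
    (v : V) (r : Rule L) : Set ℝ :=
  r.ifl (QUAL E NI v r).ncard (ELIG E NI v r).ncard

/-- Target time set of `(I,v,r)`. -/
def TTS {V L : Type} (I : Interp V L) (v : V) (r : Rule L) : Set ℕ :=
  {t | Sat (I (t - r.dt) (Sum.inl v)) r.tc}

/-- `I` is a model of `P`: it satisfies all facts, integrity constraints and rules. -/
def Models {V L : Type} (E : V → V → Prop) (P : Program V L) (I : Interp V L) :
    Prop :=
  (∀ F ∈ P.facts, ∀ t : ℕ, F.t1 ≤ t → t ≤ F.t2 → I t F.c F.lab ⊆ F.bnd) ∧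
  (∀ ic ∈ P.ics, ∀ t c, Sat (I t c) ic.body → I t c ic.lab ⊆ ic.bnd) ∧
  (∀ r ∈ P.rules, ∀ v : V, ∀ t ∈ TTS I v r,
    I t (Sum.inl v) r.head ⊆ BOUND E (I (t - r.dt)) v r)

/-- The `Γ_P` operator: at each `(t,c,lab)` intersect the previous bound with
the applicable fact bounds, constraint bounds, and rule bounds. -/
noncomputable def Gamma {V L : Type} (E : V → V → Prop) (P : Program V L)
    (I : Interp V L) : Interp V L :=
  fun t c lab =>
    (I t c lab) ∩
    (⋂₀ {b | ∃ F ∈ P.facts, F.lab = lab ∧ F.c = c ∧ F.t1 ≤ t ∧ t ≤ F.t2 ∧ b = F.bnd}) ∩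
    (⋂₀ {b | ∃ ic ∈ P.ics, ic.lab = lab ∧ Sat (I t c) ic.body ∧ b = ic.bnd}) ∩
    (⋂₀ {b | ∃ r ∈ P.rules, ∃ v : V, c = Sum.inl v ∧ r.head = lab ∧
            t ∈ TTS I v r ∧ b = BOUND E (I (t - r.dt)) v r})

lemma sat_mono {L : Type} {W W' : L → Set ℝ} (h : ∀ l, W l ⊆ W' l) :
    ∀ f : Formula L, NegFree f → Sat W' f → Sat W f := by
  intro f
  induction f with
  | atom l bnd =>
      intro _ hs
      rcases hs with h1 | ⟨h1, h2, h3⟩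
      · exact Or.inl h1
      · exact Or.inr ⟨h1, h2, (h l).trans h3⟩
  | and f g ihf ihg => exact fun hn hs => ⟨ihf hn.1 hs.1, ihg hn.2 hs.2⟩
  | or f g ihf ihg =>
      exact fun hn hs => hs.elim (fun h1 => Or.inl (ihf hn.1 h1))
        (fun h1 => Or.inr (ihg hn.2 h1))
  | not f ih => exact fun hn => hn.elim

lemma sat_congr {L : Type} {fluent : L → Prop} {W W' : L → Set ℝ}
    (h : ∀ l, ¬ fluent l → W l = W' l) :
    ∀ f : Formula L, NonFluentFormula fluent f → (Sat W f ↔ Sat W' f) := by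
  intro f
  induction f with
  | atom l bnd =>
      intro hnf
      simp only [Sat, h l hnf]
  | and f g ihf ihg => exact fun hn => and_congr (ihf hn.1) (ihg hn.2)
  | or f g ihf ihg => exact fun hn => or_congr (ihf hn.1) (ihg hn.2)
  | not f ih => exact fun hn => not_congr (ih hn)

/-- Lemma 1: if `I ⊨ P` and `I' ⊑ I` then `Γ_P(I') ⊑ I`.
Hypotheses from the framework: each rule's influence function satisfies the
monotonicity axiom; rule heads are fluent; the target and neighbor criteria
`tc, gE, gN` are non-fluent formulas; the qualifying formulas `h` and the
constraint bodies are negation-free; and `I, I'` agree on non-fluent labels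
(non-fluent atoms are unchanged by rules). -/
theorem gamma_le_of_model {V L : Type} [Finite V]
    (E : V → V → Prop) (fluent : L → Prop) (P : Program V L)
    (hifl : ∀ r ∈ P.rules, ∀ x x' y : ℕ, x < x' → r.ifl x' y ⊆ r.ifl x y)
    (hhead : ∀ r ∈ P.rules, fluent r.head)
    (htc : ∀ r ∈ P.rules, NonFluentFormula fluent r.tc)
    (hgE : ∀ r ∈ P.rules, NonFluentFormula fluent r.gE)
    (hgN : ∀ r ∈ P.rules, NonFluentFormula fluent r.gN)
    (hh : ∀ r ∈ P.rules, NegFree r.h)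
    (hics : ∀ ic ∈ P.ics, NegFree ic.body)
    (I I' : Interp V L)
    (hagree : ∀ t c lab, ¬ fluent lab → I t c lab = I' t c lab)
    (hM : Models E P I) (hle : ile I' I) :
    ile (Gamma E P I') I := by
  intro t c lab
  simp only [Gamma]
  refine Set.subset_inter (Set.subset_inter (Set.subset_inter (hle t c lab) ?_) ?_) ?_
  · -- facts
    intro x hx b hb
    obtain ⟨F, hF, rfl, rfl, h1, h2, rfl⟩ := hb
    exact hM.1 F hF t h1 h2 hx
  · -- integrity constraints
    intro x hx b hb
    obtain ⟨ic, hic, rfl, hs, rfl⟩ := hb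
    have hs' : Sat (I t c) ic.body :=
      sat_mono (fun l => hle t c l) ic.body (hics ic hic) hs
    exact hM.2.1 ic hic t c hs' hx
  · -- rules
    intro x hx b hb
    obtain ⟨r, hr, v, rfl, rfl, htts, rfl⟩ := hb
    have hagree' : ∀ l, ¬ fluent l →
        I (t - r.dt) (Sum.inl v) l = I' (t - r.dt) (Sum.inl v) l :=
      fun l hl => hagree _ _ l hl
    -- TTS agrees
    have httsI : t ∈ TTS I v r := by
      have := sat_congr hagree' r.tc (htc r hr)
      exact this.mpr htts
    -- ELIG agrees
    have hELIG : ELIG E (I' (t - r.dt)) v r = ELIG E (I (t - r.dt)) v r := by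
      ext v'
      simp only [ELIG, Set.mem_setOf_eq]
      constructor
      · rintro ⟨h1, h2, h3⟩
        exact ⟨h1, (sat_congr (fun l hl => hagree _ _ l hl) r.gN (hgN r hr)).mpr h2,
          (sat_congr (fun l hl => hagree _ _ l hl) r.gE (hgE r hr)).mpr h3⟩
      · rintro ⟨h1, h2, h3⟩
        exact ⟨h1, (sat_congr (fun l hl => hagree _ _ l hl) r.gN (hgN r hr)).mp h2,
          (sat_congr (fun l hl => hagree _ _ l hl) r.gE (hgE r hr)).mp h3⟩
    -- QUAL(I') ⊆ QUAL(I)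
    have hQUAL : QUAL E (I' (t - r.dt)) v r ⊆ QUAL E (I (t - r.dt)) v r := by
      intro v' hv'
      obtain ⟨h1, h2⟩ := hv'
      refine ⟨hELIG ▸ h1, ?_⟩
      exact sat_mono (fun l => hle (t - r.dt) (Sum.inl v') l) r.h (hh r hr) h2
    have hcard : (QUAL E (I' (t - r.dt)) v r).ncard ≤
        (QUAL E (I (t - r.dt)) v r).ncard :=
      Set.ncard_le_ncard hQUAL (Set.toFinite _)
    have hbound : BOUND E (I (t - r.dt)) v r ⊆ BOUND E (I' (t - r.dt)) v r := by
      unfold BOUND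
      rw [hELIG]
      rcases lt_or_eq_of_le hcard with h | h
      · exact hifl r hr _ _ _ h
      · rw [h]
    exact hbound (hM.2.2 r hr v t httsI hx)
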